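/- Let m₁, m₂, m₃ > 0 and s > 0 with √s > m₁ + m₂ + m₃. For a permutation (i, j, k) of (1, 2, 3) set T_k := λ(s, m_k², (m_i+m_j)²)/(4s), u_k(t) := s + m_k² − 2√s·√(t + m_k²), and G_{ij;k}(t) := √t·√(λ(u_k(t), m_i², m_j²))/(2·u_k(t)·√(t + m_k²)). Then the three iterated-integral representations of the variation of the 3-edge banana amplitude agree: ∫₀^{T_3} G_{12;3}(t) dt = ∫₀^{T_1} G_{23;1}(t) dt = ∫₀^{T_2} G_{31;2}(t) dt. (By Fubini's theorem, the value Var(Φ_R(b₃))(s) is independent of which pair of the three edges is taken as the bubble subgraph b₂ in the flag decomposition of b₃.) -/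

import Mathlib

set_option maxHeartbeats 1000000

/-- The Källén function λ(a,b,c) := a² + b² + c² − 2(ab + bc + ca). -/
noncomputable def kallen (a b c : ℝ) : ℝ := a ^ 2 + b ^ 2 + c ^ 2 - 2 * (a * b + b * c + c * a)

/-- The iterated-integral representation of the variation of the 3-edge banana amplitude
obtained by first cutting the bubble subgraph on the edges of masses `m_i, m_j` and then
the remaining edge of mass `m_k`:
`∫₀^{T_k} √t·√λ(u_k(t), m_i², m_j²)/(2·u_k(t)·√(t + m_k²)) dt`, where
`T_k = λ(s, m_k², (m_i+m_j)²)/(4s)` and `u_k(t) = s + m_k² − 2√s·√(t + m_k²)`. -/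
noncomputable def bananaVar (m_i m_j m_k s : ℝ) : ℝ :=
  ∫ t in (0 : ℝ)..(kallen s (m_k ^ 2) ((m_i + m_j) ^ 2) / (4 * s)),
    Real.sqrt t *
        Real.sqrt (kallen (s + m_k ^ 2 - 2 * Real.sqrt s * Real.sqrt (t + m_k ^ 2))
          (m_i ^ 2) (m_j ^ 2)) /
      (2 * (s + m_k ^ 2 - 2 * Real.sqrt s * Real.sqrt (t + m_k ^ 2)) *
        Real.sqrt (t + m_k ^ 2))

open MeasureTheory Set

namespace BananaProof

/-- The integrand of the symmetric one-dimensional representation of the variation. -/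
noncomputable def Jf (a b c r x : ℝ) : ℝ :=
  Real.sqrt (kallen x (a^2) (b^2)) * Real.sqrt (kallen (r^2) x (c^2)) / x

/-- The symmetric one-dimensional integral (`4·s` times the variation). -/
noncomputable def Jint (a b c r : ℝ) : ℝ :=
  ∫ x in ((a+b)^2)..((r-c)^2), Jf a b c r x

/-- The rescaled Kibble quartic for spectator `c`. -/
noncomputable def Qpoly (a b c r x y : ℝ) : ℝ :=
  (2*x*(y - b^2 - c^2) - (x + b^2 - a^2)*(r^2 - x - c^2))^2
    - kallen x (a^2) (b^2) * kallen (r^2) x (c^2)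

/-- The Dalitz region in the Mandelstam variables `(s_{ab}, s_{bc})`. -/
noncomputable def Dset (a b c r : ℝ) : Set (ℝ × ℝ) :=
  {p | Qpoly a b c r p.1 p.2 ≤ 0 ∧ (a+b)^2 ≤ p.1 ∧ (b+c)^2 ≤ p.2 ∧
        (c+a)^2 ≤ r^2 + a^2 + b^2 + c^2 - p.1 - p.2}

lemma measurable_Dset (a b c r : ℝ) : MeasurableSet (Dset a b c r) := by
  have h1 : Dset a b c r =
      {p : ℝ × ℝ | Qpoly a b c r p.1 p.2 ≤ 0} ∩ ({p | (a+b)^2 ≤ p.1} ∩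
        ({p | (b+c)^2 ≤ p.2} ∩ {p | (c+a)^2 ≤ r^2 + a^2 + b^2 + c^2 - p.1 - p.2})) := by
    ext p; simp [Dset, and_assoc, Set.mem_setOf_eq]
  rw [h1]
  have hc1 : Continuous fun p : ℝ × ℝ => Qpoly a b c r p.1 p.2 := by
    unfold Qpoly kallen; fun_prop
  refine ((isClosed_le hc1 continuous_const).measurableSet).inter ?_
  refine ((isClosed_le continuous_const continuous_fst).measurableSet).inter ?_
  refine ((isClosed_le continuous_const continuous_snd).measurableSet).inter ?_
  exact (isClosed_le continuous_const (by fun_prop)).measurableSet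

lemma P1_nonneg {a b c r x : ℝ} (ha : 0 < a) (hb : 0 < b) (hc : 0 < c) (h : a+b+c < r)
    (hx1 : (a+b)^2 ≤ x) (hx2 : x ≤ (r-c)^2) :
    0 ≤ (x + b^2 - a^2)*(r^2 - x - c^2) - 4*b*c*x := by
  have hsq : 0 < r^2-(a+b+c)^2 := by
    nlinarith [mul_pos (show (0:ℝ) < r-(a+b+c) by linarith)
      (show (0:ℝ) < r+(a+b+c) by linarith)]
  have hlo : 0 ≤ 2*b*(a+b)*(r^2-(a+b+c)^2) := by positivity
  have hhi : 0 ≤ 2*c*(r-c)*(r-c-b-a)*(r-c-b+a) := by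
    have h1 : 0 < r - c - b - a := by linarith
    have h2 : 0 < r - c := by linarith
    have h3 : 0 < r - c - b + a := by linarith
    positivity
  have hd : 0 < (r-c)^2 - (a+b)^2 := by nlinarith
  have hid : ((r-c)^2-(a+b)^2) * ((x + b^2 - a^2)*(r^2 - x - c^2) - 4*b*c*x)
      = ((r-c)^2 - x) * (2*b*(a+b)*(r^2-(a+b+c)^2))
        + (x - (a+b)^2) * (2*c*(r-c)*(r-c-b-a)*(r-c-b+a))
        + (x - (a+b)^2)*((r-c)^2 - x)*((r-c)^2-(a+b)^2) := by ring
  nlinarith [mul_nonneg (by linarith : (0:ℝ) ≤ (r-c)^2 - x) hlo,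
    mul_nonneg (by linarith : (0:ℝ) ≤ x - (a+b)^2) hhi,
    mul_nonneg (mul_nonneg (by linarith : (0:ℝ) ≤ x - (a+b)^2)
      (by linarith : (0:ℝ) ≤ (r-c)^2 - x)) hd.le]

lemma A2_nonneg {a b c r x : ℝ} (ha : 0 < a) (hb : 0 < b) (hc : 0 < c) (h : a+b+c < r)
    (hx1 : (a+b)^2 ≤ x) (hx2 : x ≤ (r-c)^2) :
    0 ≤ 2*x*(r^2 + a^2 + b^2 + c^2 - x - (c+a)^2 - b^2 - c^2)
        - (x + b^2 - a^2)*(r^2 - x - c^2) := by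
  have hsq : 0 < r^2-(a+b+c)^2 := by
    nlinarith [mul_pos (show (0:ℝ) < r-(a+b+c) by linarith)
      (show (0:ℝ) < r+(a+b+c) by linarith)]
  have hlo : 0 ≤ 2*a*(a+b)*(r^2-(a+b+c)^2) := by positivity
  have hhi : 0 ≤ 2*c*(r-c)*(r-c-a-b)*(r-c-a+b) := by
    have h1 : 0 < r - c - a - b := by linarith
    have h2 : 0 < r - c := by linarith
    have h3 : 0 < r - c - a + b := by linarith
    positivity
  have hd : 0 < (r-c)^2 - (a+b)^2 := by nlinarith
  have hid : ((r-c)^2-(a+b)^2) * (2*x*(r^2 + a^2 + b^2 + c^2 - x - (c+a)^2 - b^2 - c^2)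
        - (x + b^2 - a^2)*(r^2 - x - c^2))
      = ((r-c)^2 - x) * (2*a*(a+b)*(r^2-(a+b+c)^2))
        + (x - (a+b)^2) * (2*c*(r-c)*(r-c-a-b)*(r-c-a+b))
        + (x - (a+b)^2)*((r-c)^2 - x)*((r-c)^2-(a+b)^2) := by ring
  nlinarith [mul_nonneg (by linarith : (0:ℝ) ≤ (r-c)^2 - x) hlo,
    mul_nonneg (by linarith : (0:ℝ) ≤ x - (a+b)^2) hhi,
    mul_nonneg (mul_nonneg (by linarith : (0:ℝ) ≤ x - (a+b)^2)
      (by linarith : (0:ℝ) ≤ (r-c)^2 - x)) hd.le]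

lemma volume_slice (a b c r : ℝ) (ha : 0 < a) (hb : 0 < b) (hc : 0 < c)
    (h : a+b+c < r) (x : ℝ) :
    volume (Prod.mk x ⁻¹' Dset a b c r) =
      Set.indicator (Set.Icc ((a+b)^2) ((r-c)^2))
        (fun t => ENNReal.ofReal (Jf a b c r t)) x := by
  have hr : 0 < r := lt_trans (by positivity : (0:ℝ) < a+b+c) h
  by_cases hx1 : (a+b)^2 ≤ x
  · by_cases hx2 : x ≤ (r-c)^2
    · -- main case: the slice is a closed interval
      have hx0 : 0 < x := lt_of_lt_of_le (by positivity) hx1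
      set l1 : ℝ := kallen x (a^2) (b^2) with hl1def
      set l2 : ℝ := kallen (r^2) x (c^2) with hl2def
      have hl1 : 0 ≤ l1 := by
        have e : l1 = (x-(a+b)^2)*(x-(a-b)^2) := by rw [hl1def]; unfold kallen; ring
        have h4 : (a-b)^2 ≤ (a+b)^2 := by nlinarith
        rw [e]; exact mul_nonneg (by linarith) (by linarith)
      have hl2 : 0 ≤ l2 := by
        have e : l2 = ((r-c)^2 - x)*((r+c)^2 - x) := by rw [hl2def]; unfold kallen; ring
        have h4 : (r-c)^2 ≤ (r+c)^2 := by nlinarith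
        rw [e]; exact mul_nonneg (by linarith) (by linarith)
      set N : ℝ := 2*x*(b^2+c^2) + (x + b^2 - a^2)*(r^2 - x - c^2) with hNdef
      set P1v : ℝ := (x + b^2 - a^2)*(r^2 - x - c^2) - 4*b*c*x with hP1def
      set A2v : ℝ := 2*x*(r^2 + a^2 + b^2 + c^2 - x - (c+a)^2 - b^2 - c^2)
          - (x + b^2 - a^2)*(r^2 - x - c^2) with hA2def
      set D2 : ℝ := Real.sqrt l1 * Real.sqrt l2 with hD2def
      have hD2 : 0 ≤ D2 := mul_nonneg (Real.sqrt_nonneg _) (Real.sqrt_nonneg _)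
      have hD2sq : D2^2 = l1*l2 := by
        rw [hD2def, mul_pow, Real.sq_sqrt hl1, Real.sq_sqrt hl2]
      have hQrepr : ∀ y : ℝ, Qpoly a b c r x y = (2*x*y - N)^2 - l1*l2 := by
        intro y; rw [hNdef, hl1def, hl2def]; unfold Qpoly; ring
      have hP1 : 0 ≤ P1v := by rw [hP1def]; exact P1_nonneg ha hb hc h hx1 hx2
      have hA2 : 0 ≤ A2v := by rw [hA2def]; exact A2_nonneg ha hb hc h hx1 hx2
      have hP1sq : l1*l2 ≤ P1v^2 := by
        have e : P1v^2 - l1*l2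
            = 4*x*((b+c)*x - (b*r^2 + c*(a^2-b^2-b*c)))^2 := by
          rw [hP1def, hl1def, hl2def]; unfold kallen; ring
        have hnn : 0 ≤ 4*x*((b+c)*x - (b*r^2 + c*(a^2-b^2-b*c)))^2 :=
          mul_nonneg (by linarith) (sq_nonneg _)
        linarith
      have hA2sq : l1*l2 ≤ A2v^2 := by
        have e : A2v^2 - l1*l2
            = 4*x*((a+c)*x - (a*r^2 + c*(b^2-a^2-a*c)))^2 := by
          rw [hA2def, hl1def, hl2def]; unfold kallen; ring
        have hnn : 0 ≤ 4*x*((a+c)*x - (a*r^2 + c*(b^2-a^2-a*c)))^2 :=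
          mul_nonneg (by linarith) (sq_nonneg _)
        linarith
      have hP1D : D2 ≤ P1v := by nlinarith [hD2sq, hP1sq, hP1, hD2]
      have hA2D : D2 ≤ A2v := by nlinarith [hD2sq, hA2sq, hA2, hD2]
      have hset : Prod.mk x ⁻¹' Dset a b c r = Set.Icc ((N - D2)/(2*x)) ((N + D2)/(2*x)) := by
        ext y
        simp only [Set.mem_preimage, Dset, Set.mem_setOf_eq, Set.mem_Icc]
        constructor
        · rintro ⟨hQ, -, -, -⟩
          rw [hQrepr y] at hQ
          have key : (2*x*y - N)^2 ≤ D2^2 := by rw [hD2sq]; linarith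
          have hlow : N - D2 ≤ 2*x*y := by nlinarith [sq_nonneg (2*x*y - N + D2)]
          have hhigh : 2*x*y ≤ N + D2 := by nlinarith [sq_nonneg (2*x*y - N - D2)]
          constructor
          · rw [div_le_iff₀ (by positivity : (0:ℝ) < 2*x)]; linarith
          · rw [le_div_iff₀ (by positivity : (0:ℝ) < 2*x)]; linarith
        · rintro ⟨h1, h2⟩
          rw [div_le_iff₀ (by positivity : (0:ℝ) < 2*x)] at h1
          rw [le_div_iff₀ (by positivity : (0:ℝ) < 2*x)] at h2
          have hv1 : N - D2 ≤ 2*x*y := by linarith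
          have hv2 : 2*x*y ≤ N + D2 := by linarith
          refine ⟨?_, hx1, ?_, ?_⟩
          · rw [hQrepr y, ← hD2sq]
            nlinarith [sq_le_sq' (by linarith : -D2 ≤ 2*x*y - N) (by linarith : 2*x*y - N ≤ D2)]
          · have hNP : N - P1v = 2*x*(b+c)^2 := by rw [hNdef, hP1def]; ring
            nlinarith [hv1, hP1D, hNP, hx0]
          · have hNA : N + A2v
                = 2*x*(r^2 + a^2 + b^2 + c^2 - x - (c+a)^2 - b^2 - c^2) + 2*x*(b^2+c^2) := by
              rw [hNdef, hA2def]; ring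
            nlinarith [hv2, hA2D, hx0]
      rw [hset, Real.volume_Icc, Set.indicator_of_mem (Set.mem_Icc.2 ⟨hx1, hx2⟩)]
      congr 1
      rw [show Jf a b c r x = D2 / x from by rw [hD2def, hl1def, hl2def]; rfl]
      field_simp
      ring
    · -- x beyond the upper endpoint: empty slice
      push_neg at hx2
      have hempty : Prod.mk x ⁻¹' Dset a b c r = (∅ : Set ℝ) := by
        ext y
        simp only [Set.mem_preimage, Dset, Set.mem_setOf_eq, Set.mem_empty_iff_false, iff_false]
        rintro ⟨hQ, h1, h2, h3⟩
        have hxlt : x < (r+c)^2 := by nlinarith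
        have hl2neg : kallen (r^2) x (c^2) < 0 := by
          have e : kallen (r^2) x (c^2) = (x - (r-c)^2)*(x - (r+c)^2) := by unfold kallen; ring
          rw [e]; exact mul_neg_of_pos_of_neg (by linarith) (by linarith)
        have hl1pos : 0 < kallen x (a^2) (b^2) := by
          have e : kallen x (a^2) (b^2) = (x-(a+b)^2)*(x-(a-b)^2) := by unfold kallen; ring
          have h4 : (a-b)^2 < (a+b)^2 := by nlinarith
          have h5 : (a+b)^2 < (r-c)^2 := by nlinarith
          rw [e]; exact mul_pos (by linarith) (by linarith)
        have hgt : 0 < Qpoly a b c r x y := by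
          have e : Qpoly a b c r x y
              = (2*x*(y - b^2 - c^2) - (x + b^2 - a^2)*(r^2 - x - c^2))^2
                - kallen x (a^2) (b^2) * kallen (r^2) x (c^2) := rfl
          rw [e]
          exact sub_pos.2 (lt_of_lt_of_le (mul_neg_of_pos_of_neg hl1pos hl2neg) (sq_nonneg _))
        linarith
      rw [hempty, measure_empty,
        Set.indicator_of_notMem (fun hmem => absurd (Set.mem_Icc.1 hmem).2 (by linarith))]
  · -- x below the lower endpoint: empty slice
    push_neg at hx1
    have hempty : Prod.mk x ⁻¹' Dset a b c r = (∅ : Set ℝ) := by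
      ext y
      simp only [Set.mem_preimage, Dset, Set.mem_setOf_eq, Set.mem_empty_iff_false, iff_false]
      rintro ⟨-, h1, -, -⟩
      linarith
    rw [hempty, measure_empty,
      Set.indicator_of_notMem (fun hmem => absurd (Set.mem_Icc.1 hmem).1 (by linarith))]

lemma Jf_cont (a b c r : ℝ) (ha : 0 < a) (hb : 0 < b) :
    ContinuousOn (Jf a b c r) (Set.Icc ((a+b)^2) ((r-c)^2)) := by
  unfold Jf
  apply ContinuousOn.div
  · apply Continuous.continuousOn
    unfold kallen
    fun_prop
  · exact continuousOn_id
  · intro t ht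
    have : (0:ℝ) < t := lt_of_lt_of_le (by positivity) ht.1
    exact this.ne'

lemma volume_Dset (a b c r : ℝ) (ha : 0 < a) (hb : 0 < b) (hc : 0 < c)
    (h : a+b+c < r) :
    volume (Dset a b c r) = ENNReal.ofReal (Jint a b c r) := by
  have hr : 0 < r := lt_trans (by positivity : (0:ℝ) < a+b+c) h
  have hlohi : (a+b)^2 ≤ (r-c)^2 := by nlinarith
  rw [MeasureTheory.Measure.volume_eq_prod, Measure.prod_apply (measurable_Dset a b c r)]
  calc ∫⁻ x, volume (Prod.mk x ⁻¹' Dset a b c r)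
      = ∫⁻ x, Set.indicator (Set.Icc ((a+b)^2) ((r-c)^2))
          (fun t => ENNReal.ofReal (Jf a b c r t)) x := by
        congr 1; funext x; exact volume_slice a b c r ha hb hc h x
    _ = ∫⁻ x in Set.Icc ((a+b)^2) ((r-c)^2), ENNReal.ofReal (Jf a b c r x) := by
        rw [lintegral_indicator measurableSet_Icc]
    _ = ENNReal.ofReal (∫ x in Set.Icc ((a+b)^2) ((r-c)^2), Jf a b c r x) := by
        rw [← ofReal_integral_eq_lintegral_ofReal]
        · exact (Jf_cont a b c r ha hb).integrableOn_Icc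
        · apply (ae_restrict_iff' measurableSet_Icc).2
          filter_upwards with x hx
          have hx0 : (0:ℝ) < x := lt_of_lt_of_le (by positivity) hx.1
          exact div_nonneg (mul_nonneg (Real.sqrt_nonneg _) (Real.sqrt_nonneg _)) hx0.le
    _ = ENNReal.ofReal (Jint a b c r) := by
        rw [Jint, intervalIntegral.integral_of_le hlohi,
          MeasureTheory.integral_Icc_eq_integral_Ioc]

lemma mem_Dset_cyclic (a b c r : ℝ) (ha : 0 < a) (hb : 0 < b) (hc : 0 < c)
    (x y : ℝ) :
    (x, y) ∈ Dset a b c r ↔ (y, r^2 + a^2 + b^2 + c^2 - x - y) ∈ Dset b c a r := by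
  simp only [Dset, Set.mem_setOf_eq]
  have hid : ∀ u v : ℝ, v * Qpoly a b c r u v
      = u * Qpoly b c a r v (r^2 + a^2 + b^2 + c^2 - u - v) := by
    intro u v; unfold Qpoly kallen; ring
  constructor
  · rintro ⟨hQ, h1, h2, h3⟩
    have hx0 : 0 < x := lt_of_lt_of_le (by positivity) h1
    have hy0 : 0 < y := lt_of_lt_of_le (by positivity) h2
    refine ⟨?_, h2, by linarith, by linarith⟩
    have h4 : x * Qpoly b c a r y (r^2 + a^2 + b^2 + c^2 - x - y) ≤ 0 := by
      rw [← hid x y]; exact mul_nonpos_of_nonneg_of_nonpos hy0.le hQ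
    nlinarith [h4, hx0]
  · rintro ⟨hQ, h2, h3, h1⟩
    have hx0 : 0 < x := by nlinarith [h1]
    have hy0 : 0 < y := lt_of_lt_of_le (by positivity) h2
    refine ⟨?_, by nlinarith [h1], h2, by linarith [h3]⟩
    have h4 : y * Qpoly a b c r x y ≤ 0 := by
      rw [hid x y]; exact mul_nonpos_of_nonneg_of_nonpos hx0.le hQ
    nlinarith [h4, hy0]

lemma volume_Dset_cyclic (a b c r : ℝ) (ha : 0 < a) (hb : 0 < b) (hc : 0 < c) :
    volume (Dset b c a r) = volume (Dset a b c r) := by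
  have hS := measurable_Dset a b c r
  have hS' := measurable_Dset b c a r
  rw [MeasureTheory.Measure.volume_eq_prod, Measure.prod_apply hS']
  have key : ∀ ypt : ℝ, volume (Prod.mk ypt ⁻¹' Dset b c a r)
      = volume ((fun x => (x, ypt)) ⁻¹' Dset a b c r) := by
    intro ypt
    have hmp : MeasurePreserving (fun x : ℝ => r^2 + a^2 + b^2 + c^2 - x - ypt)
        volume volume := by
      have h1 : (fun x : ℝ => r^2 + a^2 + b^2 + c^2 - x - ypt)
          = (fun x : ℝ => (r^2 + a^2 + b^2 + c^2 - ypt) + x) ∘ Neg.neg := by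
        funext x; simp [Function.comp]; ring
      rw [h1]
      exact (measurePreserving_add_left volume _).comp
        (Measure.measurePreserving_neg volume)
    have hpre : MeasurableSet (Prod.mk ypt ⁻¹' Dset b c a r) :=
      measurable_prodMk_left hS'
    have hpr := hmp.measure_preimage hpre.nullMeasurableSet
    rw [← hpr]
    congr 1
    ext x
    simp only [Set.mem_preimage]
    exact (mem_Dset_cyclic a b c r ha hb hc x ypt).symm
  simp_rw [key]
  rw [← Measure.prod_apply_symm hS, ← MeasureTheory.Measure.volume_eq_prod]

lemma bananaVar_eq (a b c r : ℝ) (ha : 0 < a) (hb : 0 < b) (hc : 0 < c)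
    (h : a+b+c < r) :
    bananaVar a b c (r^2) = Jint a b c r / (4*r^2) := by
  have hr : 0 < r := lt_trans (by positivity : (0:ℝ) < a+b+c) h
  have hlo_le_hi : (a+b)^2 ≤ (r-c)^2 := by nlinarith
  have huIcc : Set.uIcc ((r-c)^2) ((a+b)^2) = Set.Icc ((a+b)^2) ((r-c)^2) :=
    Set.uIcc_of_ge hlo_le_hi
  set g : ℝ → ℝ := fun t =>
    Real.sqrt t * Real.sqrt (kallen (r^2 + c^2 - 2 * r * Real.sqrt (t + c^2)) (a^2) (b^2)) /
      (2 * (r^2 + c^2 - 2 * r * Real.sqrt (t + c^2)) * Real.sqrt (t + c^2)) with hgdef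
  have hbv : bananaVar a b c (r^2)
      = ∫ t in (0:ℝ)..(kallen (r^2) (c^2) ((a+b)^2) / (4*r^2)), g t := by
    unfold bananaVar
    rw [hgdef]
    simp only [Real.sqrt_sq hr.le]
  have hderiv : ∀ w ∈ Set.uIcc ((r-c)^2) ((a+b)^2),
      HasDerivAt (fun w => kallen (r^2) (c^2) w / (4*r^2)) ((2*w - 2*(r^2+c^2))/(4*r^2)) w := by
    intro w hw
    have h1 : HasDerivAt (fun w : ℝ => kallen (r^2) (c^2) w) (2*w - 2*(r^2+c^2)) w := by
      have hfun : (fun w : ℝ => kallen (r^2) (c^2) w)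
          = fun w : ℝ => w^2 - 2*(r^2+c^2)*w + (r^2-c^2)^2 := by
        funext w; unfold kallen; ring
      rw [hfun]
      have h2 := ((hasDerivAt_pow 2 w).sub
        ((hasDerivAt_id w).const_mul (2*(r^2+c^2)))).add_const ((r^2-c^2)^2)
      exact h2.congr_deriv (by norm_num)
    exact h1.div_const (4*r^2)
  have hf'cont : ContinuousOn (fun w : ℝ => (2*w - 2*(r^2+c^2))/(4*r^2))
      (Set.uIcc ((r-c)^2) ((a+b)^2)) := by fun_prop
  have hTc : kallen (r^2) (c^2) ((a+b)^2) / (4*r^2) + c^2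
      = ((r^2 + c^2 - (a+b)^2)/(2*r))^2 := by
    field_simp
    unfold kallen; ring
  have hnum0 : 0 < r^2 + c^2 - (a+b)^2 := by nlinarith
  have hupos : ∀ t ∈ Set.Icc (0:ℝ) (kallen (r^2) (c^2) ((a+b)^2) / (4*r^2)),
      (a+b)^2 ≤ r^2 + c^2 - 2*r*Real.sqrt (t + c^2) := by
    intro t ht
    have h4 : Real.sqrt (t + c^2) ≤ (r^2 + c^2 - (a+b)^2)/(2*r) := by
      have h5 := Real.sqrt_le_sqrt (by linarith [ht.2] :
        t + c^2 ≤ kallen (r^2) (c^2) ((a+b)^2) / (4*r^2) + c^2)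
      rw [hTc, Real.sqrt_sq (by positivity)] at h5
      exact h5
    have h6 : 2*r*Real.sqrt (t + c^2) ≤ r^2 + c^2 - (a+b)^2 := by
      calc 2*r*Real.sqrt (t + c^2) ≤ 2*r*((r^2 + c^2 - (a+b)^2)/(2*r)) := by
            apply mul_le_mul_of_nonneg_left h4 (by positivity)
        _ = r^2 + c^2 - (a+b)^2 := by field_simp
    linarith
  have hgc : ContinuousOn g (Set.Icc (0:ℝ) (kallen (r^2) (c^2) ((a+b)^2) / (4*r^2))) := by
    rw [hgdef]
    apply ContinuousOn.div
    · apply Continuous.continuousOn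
      unfold kallen; fun_prop
    · apply Continuous.continuousOn; fun_prop
    · intro t ht
      have h5 := hupos t ht
      have h6 : 0 < Real.sqrt (t + c^2) := Real.sqrt_pos.2 (by nlinarith [ht.1])
      have h7 : 0 < r^2 + c^2 - 2*r*Real.sqrt (t + c^2) :=
        lt_of_lt_of_le (by positivity) h5
      exact (mul_pos (mul_pos two_pos h7) h6).ne'
  have himg : (fun w => kallen (r^2) (c^2) w / (4*r^2)) '' (Set.uIcc ((r-c)^2) ((a+b)^2))
      ⊆ Set.Icc (0:ℝ) (kallen (r^2) (c^2) ((a+b)^2) / (4*r^2)) := by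
    rw [huIcc]
    rintro t ⟨w, ⟨hw1, hw2⟩, rfl⟩
    constructor
    · apply div_nonneg _ (by positivity)
      have e : kallen (r^2) (c^2) w = ((r-c)^2 - w)*((r+c)^2 - w) := by unfold kallen; ring
      rw [e]; exact mul_nonneg (by linarith) (by nlinarith)
    · have hmono : kallen (r^2) (c^2) w ≤ kallen (r^2) (c^2) ((a+b)^2) := by
        have e : kallen (r^2) (c^2) ((a+b)^2) - kallen (r^2) (c^2) w
            = (w - (a+b)^2)*(2*(r^2+c^2) - w - (a+b)^2) := by unfold kallen; ring
        nlinarith [mul_nonneg (by linarith : (0:ℝ) ≤ w - (a+b)^2)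
          (by nlinarith : (0:ℝ) ≤ 2*(r^2+c^2) - w - (a+b)^2)]
      rw [div_le_div_iff_of_pos_right (by positivity : (0:ℝ) < 4*r^2)]
      exact hmono
  have hsub := intervalIntegral.integral_comp_smul_deriv' hderiv hf'cont (hgc.mono himg)
  simp only [Function.comp] at hsub
  have hfhi : kallen (r^2) (c^2) ((r-c)^2) / (4*r^2) = 0 := by
    have e : kallen (r^2) (c^2) ((r-c)^2) = 0 := by unfold kallen; ring
    rw [e, zero_div]
  rw [hfhi] at hsub
  have hcongr : Set.EqOn
      (fun w => ((2*w - 2*(r^2+c^2))/(4*r^2)) • g (kallen (r^2) (c^2) w / (4*r^2)))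
      (fun w => -(Jf a b c r w / (4*r^2))) (Set.uIcc ((a+b)^2) ((r-c)^2)) := by
    intro w hw
    rw [Set.uIcc_of_le hlo_le_hi] at hw
    obtain ⟨hw1, hw2⟩ := hw
    have hw0 : 0 < w := lt_of_lt_of_le (by positivity) hw1
    have hnum : 0 < r^2 + c^2 - w := by nlinarith
    have hkal : 0 ≤ kallen (r^2) w (c^2) := by
      have e : kallen (r^2) w (c^2) = ((r-c)^2 - w)*((r+c)^2 - w) := by unfold kallen; ring
      rw [e]; exact mul_nonneg (by linarith) (by nlinarith)
    have h1 : Real.sqrt (kallen (r^2) (c^2) w / (4*r^2) + c^2) = (r^2 + c^2 - w)/(2*r) := by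
      have e2 : kallen (r^2) (c^2) w / (4*r^2) + c^2 = ((r^2 + c^2 - w)/(2*r))^2 := by
        field_simp; unfold kallen; ring
      rw [e2, Real.sqrt_sq (by positivity)]
    have h3 : Real.sqrt (kallen (r^2) (c^2) w / (4*r^2))
        = Real.sqrt (kallen (r^2) w (c^2)) / (2*r) := by
      have e3 : kallen (r^2) (c^2) w / (4*r^2) = kallen (r^2) w (c^2) / (2*r)^2 := by
        field_simp; unfold kallen; ring
      rw [e3, Real.sqrt_div hkal, Real.sqrt_sq (by positivity)]
    have h2 : r^2 + c^2 - 2*r*Real.sqrt (kallen (r^2) (c^2) w / (4*r^2) + c^2) = w := by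
      rw [h1]; field_simp; ring
    simp only [hgdef, smul_eq_mul, Jf]
    rw [h2, h1, h3]
    field_simp
    ring
  have hfinal : (∫ w in ((a+b)^2)..((r-c)^2),
      ((2*w - 2*(r^2+c^2))/(4*r^2)) • g (kallen (r^2) (c^2) w / (4*r^2)))
      = -(Jint a b c r / (4*r^2)) := by
    rw [intervalIntegral.integral_congr hcongr, intervalIntegral.integral_neg]
    congr 1
    rw [Jint, intervalIntegral.integral_div]
  rw [hbv, ← hsub, intervalIntegral.integral_symm, hfinal, neg_neg]

lemma Jint_nonneg (a b c r : ℝ) (ha : 0 < a) (hb : 0 < b) (hc : 0 < c)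
    (h : a+b+c < r) : 0 ≤ Jint a b c r := by
  apply intervalIntegral.integral_nonneg (by nlinarith : (a+b)^2 ≤ (r-c)^2)
  intro x hx
  have hx0 : (0:ℝ) < x := lt_of_lt_of_le (by positivity) hx.1
  exact div_nonneg (mul_nonneg (Real.sqrt_nonneg _) (Real.sqrt_nonneg _)) hx0.le

lemma Jint_cyclic (a b c r : ℝ) (ha : 0 < a) (hb : 0 < b) (hc : 0 < c)
    (h : a+b+c < r) :
    Jint a b c r = Jint b c a r := by
  have hv := volume_Dset_cyclic a b c r ha hb hc
  rw [volume_Dset a b c r ha hb hc h,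
    volume_Dset b c a r hb hc ha (by linarith)] at hv
  exact ((ENNReal.ofReal_eq_ofReal_iff (Jint_nonneg b c a r hb hc ha (by linarith))
    (Jint_nonneg a b c r ha hb hc h)).1 hv).symm

end BananaProof

/-- For `m₁, m₂, m₃ > 0` and `√s > m₁ + m₂ + m₃`, the three iterated-integral
representations of the variation of the 3-edge banana amplitude agree:
`∫₀^{T₃} G_{12;3} = ∫₀^{T₁} G_{23;1} = ∫₀^{T₂} G_{31;2}` — by Fubini, `Var(Φ_R(b₃))(s)`
is independent of which pair of edges is taken as the bubble subgraph `b₂` in the flag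
decomposition of `b₃`. -/
theorem banana_var_flag_independent (m₁ m₂ m₃ s : ℝ)
    (h1 : 0 < m₁) (h2 : 0 < m₂) (h3 : 0 < m₃) (hs : 0 < s)
    (hth : m₁ + m₂ + m₃ < Real.sqrt s) :
    bananaVar m₁ m₂ m₃ s = bananaVar m₂ m₃ m₁ s ∧
    bananaVar m₂ m₃ m₁ s = bananaVar m₃ m₁ m₂ s := by
  have hsr : s = (Real.sqrt s)^2 := (Real.sq_sqrt hs.le).symm
  set r := Real.sqrt s with hrdef
  have e1 : bananaVar m₁ m₂ m₃ s = BananaProof.Jint m₁ m₂ m₃ r / (4*r^2) := by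
    rw [hsr]; exact BananaProof.bananaVar_eq m₁ m₂ m₃ r h1 h2 h3 hth
  have e2 : bananaVar m₂ m₃ m₁ s = BananaProof.Jint m₂ m₃ m₁ r / (4*r^2) := by
    rw [hsr]; exact BananaProof.bananaVar_eq m₂ m₃ m₁ r h2 h3 h1 (by linarith)
  have e3 : bananaVar m₃ m₁ m₂ s = BananaProof.Jint m₃ m₁ m₂ r / (4*r^2) := by
    rw [hsr]; exact BananaProof.bananaVar_eq m₃ m₁ m₂ r h3 h1 h2 (by linarith)
  constructor
  · rw [e1, e2, BananaProof.Jint_cyclic m₁ m₂ m₃ r h1 h2 h3 hth]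
  · rw [e2, e3, BananaProof.Jint_cyclic m₂ m₃ m₁ r h2 h3 h1 (by linarith)]
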